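/- arXiv:1204.1180 — 2 statements merged into one kernel-verified Lean document; each statement's English description precedes it below -/
import Mathlib

section
/- Let α > 0 with α ≠ 2 and let d > min(α,2) =: m. There is a constant C < ∞, depending only on d, α and the constants of the Assumption, such that for every L ≥ 1, every step distribution D satisfying items (i)–(iv) of the Assumption with parameters α, L, every p ∈ [0,1] and every x ∈ ℤ^d: δ_{o,x} ≤ S_p(x) ≤ δ_{o,x} + C·L^{−m}·⟨x⟩_L^{−(d−m)}. -/
open scoped BigOperators ENNReal
open Filter MeasureTheory

noncomputable section

namespace LongRange

abbrev V (d : ℕ) : Type := Fin d → ℤ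

variable {d : ℕ}

def nrm (x : V d) : ℝ := Real.sqrt (∑ i, ((x i : ℝ)) ^ 2)

def knrm (k : Fin d → ℝ) : ℝ := Real.sqrt (∑ i, (k i) ^ 2)

def bkt (L : ℝ) (x : V d) : ℝ := max (nrm x) L

def kdelta (x : V d) : ℝ := if x = 0 then 1 else 0

structure IsStepDist (D : V d → ℝ) : Prop where
  nonneg : ∀ x, 0 ≤ D x
  le_one : ∀ x, D x ≤ 1
  sum_one : HasSum D 1
  ne_one : D 0 ≠ 1
  reflect : ∀ (s : Fin d → Bool) (x : V d),
      D (fun i => if s i then -(x i) else x i) = D x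
  perm : ∀ (e : Equiv.Perm (Fin d)) (x : V d), D (fun i => x (e i)) = D x

def convPow (D : V d → ℝ) : ℕ → V d → ℝ
  | 0, x => kdelta x
  | n + 1, x => ∑' y : V d, convPow D n y * D (x - y)

def Sgreen (D : V d → ℝ) (p : ℝ) (x : V d) : ℝ≥0∞ :=
  ∑' n : ℕ, ENNReal.ofReal (p ^ n * convPow D n x)

def sawG (D : V d → ℝ) (p : ℝ) (x : V d) : ℝ≥0∞ :=
  ∑' n : ℕ,
    ∑' ω : {ω : Fin (n + 1) → V d //
        ω 0 = 0 ∧ ω (Fin.last n) = x ∧ Function.Injective ω},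
      ENNReal.ofReal (p ^ n * ∏ j : Fin n, D (ω.1 j.succ - ω.1 j.castSucc))

def chi (D : V d → ℝ) (p : ℝ) : ℝ≥0∞ := ∑' x : V d, sawG D p x

def pc (D : V d → ℝ) : ℝ := sSup {p : ℝ | 0 ≤ p ∧ chi D p < ⊤}

def hatD (D : V d → ℝ) (k : Fin d → ℝ) : ℝ :=
  ∑' x : V d, Real.cos (∑ i, k i * (x i : ℝ)) * D x

def ItemI (D : V d → ℝ) (α L c₁ : ℝ) : Prop :=
  ∀ x : V d, D x ≤ c₁ * L ^ α * bkt L x ^ (-(d : ℝ) - α)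

def ItemII (D : V d → ℝ) (α L v c₄ ε : ℝ) : Prop :=
  ∀ k : Fin d → ℝ, (∀ i, |k i| ≤ Real.pi) →
    |1 - hatD D k - v * knrm k ^ min α 2| ≤ c₄ * v * knrm k ^ min α 2 * (L * knrm k) ^ ε

def ItemIIIa (D : V d → ℝ) (α L c₅ : ℝ) : Prop :=
  ∀ n : ℕ, 1 ≤ n → ∀ x : V d,
    convPow D n x ≤ c₅ * L ^ (-(d : ℝ)) * (n : ℝ) ^ (-(d : ℝ) / min α 2)

def ItemIIIb (D : V d → ℝ) (Δ : ℝ) : Prop :=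
  ∀ k : Fin d → ℝ, (∀ i, |k i| ≤ Real.pi) → 1 - hatD D k ≤ 2 - Δ

def ItemIIIc (D : V d → ℝ) (L Δ : ℝ) : Prop :=
  ∀ k : Fin d → ℝ, (∀ i, |k i| ≤ Real.pi) → (∃ i, 1 / L ≤ |k i|) → Δ ≤ 1 - hatD D k

def ItemIV (D : V d → ℝ) (α L c₆ : ℝ) : Prop :=
  ∀ n : ℕ, 1 ≤ n → ∀ x : V d,
    convPow D n x ≤ c₆ * L ^ min α 2 * (n : ℝ) * bkt L x ^ (-(d : ℝ) - min α 2)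

def ItemV (D : V d → ℝ) (α L c₇ : ℝ) : Prop :=
  ∀ n : ℕ, 1 ≤ n → ∀ x y : V d, nrm y ≤ nrm x / 3 →
    |convPow D n x - (convPow D n (x + y) + convPow D n (x - y)) / 2| ≤
      c₇ * L ^ min α 2 * bkt L y ^ 2 * (n : ℝ) * bkt L x ^ (-(d : ℝ) - min α 2 - 2)


/-! ### Auxiliary lemmas -/

lemma bern_aux {u t : ℝ} (hu0 : 0 < u) (ht : 0 < t) : 1 + t*(1-u) ≤ u ^ (-t) := by
  have hlog := Real.log_le_sub_one_of_pos hu0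
  calc 1 + t*(1-u) ≤ Real.exp (t*(1-u)) := by
        have := Real.add_one_le_exp (t*(1-u)); linarith
    _ ≤ Real.exp (t * (-Real.log u)) := by
        apply Real.exp_le_exp.2; nlinarith
    _ = u ^ (-t) := by rw [Real.rpow_def_of_pos hu0]; ring_nf

lemma step_aux {a t : ℝ} (ha : 1 ≤ a) (ht : 0 < t) :
    t * (a+1) ^ (-(t+1)) ≤ a ^ (-t) - (a+1) ^ (-t) := by
  have ha0 : (0:ℝ) < a := by linarith
  have ha1 : (0:ℝ) < a + 1 := by linarith
  have hu0 : (0:ℝ) < a/(a+1) := by positivity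
  have hb := bern_aux hu0 ht
  have e : (a/(a+1)) ^ (-t) = a^(-t) / (a+1)^(-t) := Real.div_rpow ha0.le ha1.le _
  have h1u : 1 - a/(a+1) = 1/(a+1) := by field_simp; ring
  rw [e, h1u] at hb
  have hp1 : (0:ℝ) < (a+1)^(-t) := Real.rpow_pos_of_pos ha1 _
  have key := (le_div_iff₀ hp1).mp hb
  have e2 : (a+1)^(-(t+1)) = (a+1)^(-t) * (1/(a+1)) := by
    rw [show -(t+1) = -t + (-1) by ring, Real.rpow_add ha1, Real.rpow_neg_one]
    ring
  rw [e2]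
  nlinarith [key]

lemma tail_partial_aux {t : ℝ} (ht : 0 < t) (N : ℕ) (hN : 1 ≤ N) (k : ℕ) :
    t * ∑ i ∈ Finset.range k, ((i+N+1 : ℕ):ℝ) ^ (-(t+1)) ≤ (N:ℝ)^(-t) - ((N+k:ℕ):ℝ)^(-t) := by
  induction k with
  | zero => simp
  | succ k ih =>
    rw [Finset.sum_range_succ, mul_add]
    have ha : (1:ℝ) ≤ ((N:ℝ) + k) := by
      have h1 : (1:ℝ) ≤ (N:ℝ) := by exact_mod_cast hN
      have h2 : (0:ℝ) ≤ (k:ℝ) := Nat.cast_nonneg k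
      linarith
    have hs := step_aux ha ht
    have c1 : ((k+N+1 : ℕ):ℝ) = ((N:ℝ) + k) + 1 := by push_cast; ring
    have c2 : ((N+k : ℕ):ℝ) = (N:ℝ) + k := by push_cast; ring
    have c3 : ((N+(k+1) : ℕ):ℝ) = ((N:ℝ) + k) + 1 := by push_cast; ring
    rw [c1, c3]
    rw [c2] at ih
    linarith

lemma tail_tsum_aux {t : ℝ} (ht : 0 < t) (N : ℕ) (hN : 1 ≤ N) :
    ∑' n : ℕ, ENNReal.ofReal (((n+N+1 : ℕ):ℝ) ^ (-(t+1))) ≤ ENNReal.ofReal ((N:ℝ)^(-t) / t) := by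
  apply ENNReal.tsum_le_of_sum_range_le
  intro k
  rw [← ENNReal.ofReal_sum_of_nonneg (fun i _ => Real.rpow_nonneg (Nat.cast_nonneg _) _)]
  apply ENNReal.ofReal_le_ofReal
  have h := tail_partial_aux ht N hN k
  have hNt : (0:ℝ) ≤ ((N+k:ℕ):ℝ)^(-t) := Real.rpow_nonneg (Nat.cast_nonneg _) _
  rw [le_div_iff₀ ht]
  linarith

lemma convPow_nonneg {D : V d → ℝ} (hD : ∀ y, 0 ≤ D y) : ∀ n (x : V d), 0 ≤ convPow D n x := by
  intro n
  induction n with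
  | zero =>
    intro x
    simp only [convPow, kdelta]
    split <;> norm_num
  | succ n ih =>
    intro x
    exact tsum_nonneg fun y => mul_nonneg (ih y) (hD (x - y))

set_option maxHeartbeats 1000000 in
/-- random-walk Green's function bound for p ≤ 1. -/
theorem statement1 (d : ℕ) (hd : 1 ≤ d) (α : ℝ) (hα : 0 < α) (hαne : α ≠ 2)
    (hdm : min α 2 < (d : ℝ))
    (c₁ c₂ c₃ c₄ c₅ c₆ ε Δ : ℝ)
    (hc₁ : 0 < c₁) (hc₂ : 0 < c₂) (hc₃ : 0 < c₃) (hc₄ : 0 < c₄)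
    (hc₅ : 0 < c₅) (hc₆ : 0 < c₆)
    (hε : 0 < ε) (hε1 : ε ≤ 1) (hΔ : 0 < Δ) (hΔ1 : Δ < 1) :
    ∃ C : ℝ, 0 ≤ C ∧
      ∀ L : ℝ, 1 ≤ L → ∀ D : V d → ℝ, ∀ v : ℝ,
        IsStepDist D →
        c₂ * L ^ min α 2 ≤ v → v ≤ c₃ * L ^ min α 2 →
        ItemI D α L c₁ → ItemII D α L v c₄ ε →
        ItemIIIa D α L c₅ → ItemIIIb D Δ → ItemIIIc D L Δ →
        ItemIV D α L c₆ →
        ∀ p : ℝ, 0 ≤ p → p ≤ 1 → ∀ x : V d,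
          ENNReal.ofReal (kdelta x) ≤ Sgreen D p x ∧
          Sgreen D p x ≤
            ENNReal.ofReal
              (kdelta x + C * L ^ (-(min α 2)) * bkt L x ^ (-((d : ℝ) - min α 2))) := by
  classical
  have hm0 : 0 < min α 2 := lt_min hα two_pos
  have hm2 : min α 2 ≤ 2 := min_le_right _ _
  have hdm' : (0:ℝ) < (d:ℝ) - min α 2 := by linarith
  refine ⟨4*c₆ + 2*c₅/((d:ℝ) - min α 2), by positivity, ?_⟩
  intro L hL D v hD _ _ _ _ hIIIa _ _ hIV p hp0 hp1 x
  set m := min α 2 with hmdef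
  have hL0 : (0:ℝ) < L := by linarith
  have hconv : ∀ n (y : V d), 0 ≤ convPow D n y := convPow_nonneg hD.nonneg
  have hkd : 0 ≤ kdelta x := by unfold kdelta; split <;> norm_num
  set r := bkt L x with hrdef
  have hLr : L ≤ r := le_max_right _ _
  have hr0 : (0:ℝ) < r := lt_of_lt_of_le hL0 hLr
  constructor
  · -- lower bound
    refine le_trans (le_of_eq ?_) (ENNReal.le_tsum 0)
    simp [convPow]
  · -- upper bound
    have hrL1 : (1:ℝ) ≤ r / L := (one_le_div hL0).mpr hLr
    set T := (r/L) ^ m with hTdef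
    have hT1 : (1:ℝ) ≤ T := Real.one_le_rpow hrL1 hm0.le
    set N := ⌈T⌉₊ with hNdef
    have hTN : T ≤ (N:ℝ) := Nat.le_ceil T
    have hN1 : 1 ≤ N := Nat.one_le_ceil_iff.mpr (by linarith)
    have hN2T : (N:ℝ) ≤ 2*T := by
      have := Nat.ceil_lt_add_one (show (0:ℝ) ≤ T by linarith)
      linarith
    set t := ((d:ℝ) - m)/m with htdef
    have ht0 : 0 < t := div_pos hdm' hm0
    have ht1 : t + 1 = (d:ℝ)/m := by rw [htdef]; field_simp; ring
    have hrdm : (0:ℝ) < r ^ (-(d:ℝ) - m) := Real.rpow_pos_of_pos hr0 _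
    have hLm : (0:ℝ) < L ^ m := Real.rpow_pos_of_pos hL0 _
    have eT : T = r^m / L^m := Real.div_rpow hr0.le hL0.le m
    have e1 : r^m * r^m * r^(-(d:ℝ)-m) = r^(m-(d:ℝ)) := by
      rw [← Real.rpow_add hr0, ← Real.rpow_add hr0]; ring_nf
    have e2 : T * T * (L^m * r^(-(d:ℝ)-m)) = L^(-m) * r^(m-(d:ℝ)) := by
      rw [eT, Real.rpow_neg hL0.le, ← e1]; field_simp
    -- head real bound
    have headreal : (N:ℝ) * (c₆ * L^m * (N:ℝ) * r^(-(d:ℝ)-m)) ≤ 4*c₆ * (L^(-m) * r^(m-(d:ℝ))) := by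
      have hN2 : (N:ℝ)*(N:ℝ) ≤ (2*T)*(2*T) :=
        mul_le_mul hN2T hN2T (Nat.cast_nonneg N) (by positivity)
      calc (N:ℝ) * (c₆ * L^m * (N:ℝ) * r^(-(d:ℝ)-m))
          = ((N:ℝ)*(N:ℝ)) * (c₆ * (L^m * r^(-(d:ℝ)-m))) := by ring
        _ ≤ ((2*T)*(2*T)) * (c₆ * (L^m * r^(-(d:ℝ)-m))) := by
            apply mul_le_mul_of_nonneg_right hN2 (by positivity)
        _ = 4*c₆ * (T*T*(L^m * r^(-(d:ℝ)-m))) := by ring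
        _ = 4*c₆ * (L^(-m) * r^(m-(d:ℝ))) := by rw [e2]
    -- tail real bound
    have tailreal : c₅ * L^(-(d:ℝ)) * ((N:ℝ)^(-t)/t) ≤
        (2*c₅/((d:ℝ)-m)) * (L^(-m) * r^(m-(d:ℝ))) := by
      have hT0 : (0:ℝ) < T := by linarith
      have hNT : (N:ℝ)^(-t) ≤ T^(-t) :=
        Real.rpow_le_rpow_of_nonpos hT0 hTN (by linarith)
      have eTt : T^(-t) = r^(m-(d:ℝ)) / L^(m-(d:ℝ)) := by
        rw [hTdef, ← Real.rpow_mul (by positivity : (0:ℝ) ≤ r/L),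
          show m * (-t) = m - (d:ℝ) by rw [htdef]; field_simp; ring,
          Real.div_rpow hr0.le hL0.le]
      have hLmd : (0:ℝ) < L^(m-(d:ℝ)) := Real.rpow_pos_of_pos hL0 _
      have e3 : L^(-(d:ℝ)) * r^(m-(d:ℝ)) / L^(m-(d:ℝ)) = L^(-m) * r^(m-(d:ℝ)) := by
        rw [mul_comm, mul_div_assoc, ← Real.rpow_sub hL0,
          show -(d:ℝ) - (m - (d:ℝ)) = -m by ring, mul_comm]
      have h1t : 1/t ≤ 2/((d:ℝ)-m) := by
        rw [htdef, one_div_div]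
        exact div_le_div_of_nonneg_right hm2 hdm'.le
      have hLd : (0:ℝ) < L^(-(d:ℝ)) := Real.rpow_pos_of_pos hL0 _
      have hrm : (0:ℝ) < r^(m-(d:ℝ)) := Real.rpow_pos_of_pos hr0 _
      calc c₅ * L^(-(d:ℝ)) * ((N:ℝ)^(-t)/t)
          ≤ c₅ * L^(-(d:ℝ)) * (T^(-t)/t) := by
            apply mul_le_mul_of_nonneg_left _ (by positivity)
            exact div_le_div_of_nonneg_right hNT ht0.le
        _ = c₅ * (L^(-(d:ℝ)) * r^(m-(d:ℝ)) / L^(m-(d:ℝ))) * (1/t) := by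
            rw [eTt]; ring
        _ = c₅ * (L^(-m) * r^(m-(d:ℝ))) * (1/t) := by rw [e3]
        _ ≤ c₅ * (L^(-m) * r^(m-(d:ℝ))) * (2/((d:ℝ)-m)) := by
            apply mul_le_mul_of_nonneg_left h1t (by positivity)
        _ = (2*c₅/((d:ℝ)-m)) * (L^(-m) * r^(m-(d:ℝ))) := by ring
    -- ENNReal assembly
    have hcL : (0:ℝ) ≤ c₅ * L^(-(d:ℝ)) := by positivity
    have headbound : ∑ i ∈ Finset.range N, ENNReal.ofReal (convPow D (i+1) x)
        ≤ ENNReal.ofReal (4*c₆ * (L^(-m) * r^(m-(d:ℝ)))) := by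
      have hterm : ∀ i ∈ Finset.range N, ENNReal.ofReal (convPow D (i+1) x)
          ≤ ENNReal.ofReal (c₆ * L^m * (N:ℝ) * r^(-(d:ℝ)-m)) := by
        intro i hi
        apply ENNReal.ofReal_le_ofReal
        have h := hIV (i+1) (Nat.le_add_left 1 i) x
        have hc : ((i+1:ℕ):ℝ) ≤ (N:ℝ) := by
          exact_mod_cast Nat.succ_le_of_lt (Finset.mem_range.mp hi)
        calc convPow D (i+1) x ≤ c₆ * L^m * ((i+1:ℕ):ℝ) * r^(-(d:ℝ)-m) := h
          _ ≤ c₆ * L^m * (N:ℝ) * r^(-(d:ℝ)-m) := by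
              apply mul_le_mul_of_nonneg_right _ hrdm.le
              apply mul_le_mul_of_nonneg_left hc (by positivity)
      calc ∑ i ∈ Finset.range N, ENNReal.ofReal (convPow D (i+1) x)
          ≤ ∑ _i ∈ Finset.range N, ENNReal.ofReal (c₆ * L^m * (N:ℝ) * r^(-(d:ℝ)-m)) :=
            Finset.sum_le_sum hterm
        _ = N • ENNReal.ofReal (c₆ * L^m * (N:ℝ) * r^(-(d:ℝ)-m)) := by
            rw [Finset.sum_const, Finset.card_range]
        _ = ENNReal.ofReal ((N:ℝ) * (c₆ * L^m * (N:ℝ) * r^(-(d:ℝ)-m))) := by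
            rw [nsmul_eq_mul, ← ENNReal.ofReal_natCast N,
              ← ENNReal.ofReal_mul (Nat.cast_nonneg N)]
        _ ≤ ENNReal.ofReal (4*c₆ * (L^(-m) * r^(m-(d:ℝ)))) :=
            ENNReal.ofReal_le_ofReal headreal
    have tailbound : ∑' n : ℕ, ENNReal.ofReal (convPow D (n+N+1) x)
        ≤ ENNReal.ofReal ((2*c₅/((d:ℝ)-m)) * (L^(-m) * r^(m-(d:ℝ)))) := by
      calc ∑' n : ℕ, ENNReal.ofReal (convPow D (n+N+1) x)
          ≤ ∑' n : ℕ, ENNReal.ofReal (c₅ * L^(-(d:ℝ)) * ((n+N+1:ℕ):ℝ)^(-(t+1))) := by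
            apply ENNReal.tsum_le_tsum
            intro n
            apply ENNReal.ofReal_le_ofReal
            have h := hIIIa (n+N+1) (by omega) x
            rwa [show (-(d:ℝ)/ m) = -(t+1) by rw [ht1]; ring] at h
        _ = ENNReal.ofReal (c₅ * L^(-(d:ℝ))) *
              ∑' n : ℕ, ENNReal.ofReal (((n+N+1:ℕ):ℝ)^(-(t+1))) := by
            simp_rw [ENNReal.ofReal_mul hcL]
            rw [ENNReal.tsum_mul_left]
        _ ≤ ENNReal.ofReal (c₅ * L^(-(d:ℝ))) * ENNReal.ofReal ((N:ℝ)^(-t)/t) :=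
            mul_le_mul_right (tail_tsum_aux ht0 N hN1) _
        _ = ENNReal.ofReal (c₅ * L^(-(d:ℝ)) * ((N:ℝ)^(-t)/t)) :=
            (ENNReal.ofReal_mul hcL).symm
        _ ≤ ENNReal.ofReal ((2*c₅/((d:ℝ)-m)) * (L^(-m) * r^(m-(d:ℝ)))) :=
            ENNReal.ofReal_le_ofReal tailreal
    have hCnn : (0:ℝ) ≤ (4*c₆ + 2*c₅/((d:ℝ) - m)) * L ^ (-m) * r ^ (-((d:ℝ) - m)) := by
      positivity
    rw [show -((d:ℝ) - m) = m - (d:ℝ) by ring] at hCnn ⊢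
    rw [ENNReal.ofReal_add hkd hCnn]
    unfold Sgreen
    rw [tsum_eq_zero_add' ENNReal.summable]
    apply add_le_add
    · apply le_of_eq; norm_num [convPow]
    · calc ∑' n : ℕ, ENNReal.ofReal (p^(n+1) * convPow D (n+1) x)
          ≤ ∑' n : ℕ, ENNReal.ofReal (convPow D (n+1) x) := by
            apply ENNReal.tsum_le_tsum
            intro n
            apply ENNReal.ofReal_le_ofReal
            exact mul_le_of_le_one_left (hconv _ _) (pow_le_one₀ hp0 hp1)
        _ = ∑ i ∈ Finset.range N, ENNReal.ofReal (convPow D (i+1) x) +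
              ∑' n : ℕ, ENNReal.ofReal (convPow D (n+N+1) x) :=
            (Summable.sum_add_tsum_nat_add' (f := fun n => ENNReal.ofReal (convPow D (n+1) x)) (k := N) ENNReal.summable).symm
        _ ≤ ENNReal.ofReal (4*c₆ * (L^(-m) * r^(m-(d:ℝ)))) +
              ENNReal.ofReal ((2*c₅/((d:ℝ)-m)) * (L^(-m) * r^(m-(d:ℝ)))) :=
            add_le_add headbound tailbound
        _ = ENNReal.ofReal ((4*c₆ + 2*c₅/((d:ℝ) - m)) * L ^ (-m) * r ^ (m-(d:ℝ))) := by
            rw [← ENNReal.ofReal_add (by positivity) (by positivity)]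
            congr 1; ring

end LongRange
end
end

section
/- Let α > 0, L ≥ 1, c₁ < ∞, and let D be a step distribution on ℤ^d satisfying D(x) ≤ c₁ L^α ⟨x⟩_L^{−d−α} for all x ∈ ℤ^d. Then for every p with χ_p < ∞ (i.e. every p < p_c for the self-avoiding walk) there exists a constant K_p < ∞ (depending on p, d, α, L, c₁ and D) such that G_p(x) ≤ K_p ⟨x⟩_L^{−d−α} for every x ∈ ℤ^d. -/
open scoped BigOperators ENNReal
open Filter MeasureTheory

noncomputable section

namespace LongRange

variable {d : ℕ}

section Statement9Aux

variable {d : ℕ}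

/-! ### Norm facts -/

def s9emb (x : V d) : EuclideanSpace ℝ (Fin d) := WithLp.toLp 2 (fun i => (x i : ℝ))

lemma s9nrm_eq (x : V d) : nrm x = ‖s9emb x‖ := by
  rw [EuclideanSpace.norm_eq, nrm]
  congr 1
  refine Finset.sum_congr rfl fun i _ => ?_
  rw [Real.norm_eq_abs, sq_abs]
  rfl

lemma s9emb_sub (x y : V d) : s9emb (x - y) = s9emb x - s9emb y := by
  ext i
  show (((x - y) i : ℤ) : ℝ) = s9emb x i - s9emb y i
  simp [s9emb, Pi.sub_apply]

lemma s9nrm_nonneg (x : V d) : 0 ≤ nrm x := Real.sqrt_nonneg _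

lemma s9nrm_zero : nrm (0 : V d) = 0 := by
  simp [nrm]

lemma s9nrm_telescope (f : ℕ → V d) (n : ℕ) :
    nrm (f n - f 0) ≤ ∑ i ∈ Finset.range n, nrm (f (i + 1) - f i) := by
  calc nrm (f n - f 0) = ‖s9emb (f n) - s9emb (f 0)‖ := by rw [s9nrm_eq, s9emb_sub]
    _ = ‖∑ i ∈ Finset.range n, (s9emb (f (i+1)) - s9emb (f i))‖ := by
        rw [Finset.sum_range_sub (fun i => s9emb (f i))]
    _ ≤ ∑ i ∈ Finset.range n, ‖s9emb (f (i+1)) - s9emb (f i)‖ := norm_sum_le _ _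
    _ = ∑ i ∈ Finset.range n, nrm (f (i+1) - f i) := by
        refine Finset.sum_congr rfl fun i _ => ?_
        rw [s9nrm_eq, s9emb_sub]

lemma s9bkt_pos {L : ℝ} (hL : 0 < L) (x : V d) : 0 < bkt L x :=
  lt_of_lt_of_le hL (le_max_right _ _)

lemma s9bkt_le_mul {L : ℝ} (hL : 0 < L) {n : ℕ} (hn : 1 ≤ n) {x z : V d}
    (h : nrm x / n ≤ nrm z) : bkt L x ≤ n * bkt L z := by
  have hn' : (0:ℝ) < n := by exact_mod_cast hn
  have hn1 : (1:ℝ) ≤ n := by exact_mod_cast hn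
  have hz : 0 < bkt L z := s9bkt_pos hL z
  have h1 : nrm x ≤ n * bkt L z := by
    have h' : nrm x / n ≤ bkt L z := h.trans (le_max_left _ L)
    have := (div_le_iff₀ hn').mp h'
    linarith
  have h2 : L ≤ n * bkt L z := by
    have hb : L ≤ bkt L z := le_max_right _ _
    nlinarith
  exact max_le h1 h2

/-- Key rpow comparison: if `nrm x / n ≤ nrm z` then
`bkt L z ^ (-β) ≤ n ^ β * bkt L x ^ (-β)`. -/
lemma s9bkt_rpow {L β : ℝ} (hL : 0 < L) (hβ : 0 < β) {n : ℕ} (hn : 1 ≤ n) {x z : V d}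
    (h : nrm x / n ≤ nrm z) :
    bkt L z ^ (-β) ≤ (n:ℝ) ^ β * bkt L x ^ (-β) := by
  have hn' : (0:ℝ) < n := by exact_mod_cast hn
  have hx := s9bkt_pos hL x
  have hz := s9bkt_pos hL z
  have hdiv : bkt L x / n ≤ bkt L z := by
    rw [div_le_iff₀ hn']
    linarith [s9bkt_le_mul hL hn h]
  have h1 : bkt L z ^ (-β) ≤ (bkt L x / n) ^ (-β) :=
    Real.rpow_le_rpow_of_nonpos (by positivity) hdiv (by linarith)
  calc bkt L z ^ (-β) ≤ (bkt L x / n) ^ (-β) := h1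
    _ = (n:ℝ) ^ β * bkt L x ^ (-β) := by
        rw [Real.div_rpow hx.le hn'.le, Real.rpow_neg hx.le, Real.rpow_neg hn'.le]
        field_simp

end Statement9Aux
/-! ### Walks and weights -/

def s9idx (n i : ℕ) : Fin (n + 1) := ⟨min i n, Nat.lt_succ_of_le (min_le_right _ _)⟩

lemma s9idx_val {n i : ℕ} (h : i ≤ n) : (s9idx n i : ℕ) = i := by
  simp [s9idx, Nat.min_eq_left h]

def s9stp {n : ℕ} (ω : Fin (n + 1) → V d) (i : ℕ) : V d :=
  ω (s9idx n (i + 1)) - ω (s9idx n i)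

def s9wt (D : V d → ℝ) (p : ℝ) (n : ℕ) (ω : Fin (n + 1) → V d) : ℝ :=
  p ^ n * ∏ j : Fin n, D (ω j.succ - ω j.castSucc)

def WalkTo (n : ℕ) (x : V d) : Type :=
  {ω : Fin (n + 1) → V d // ω 0 = 0 ∧ ω (Fin.last n) = x ∧ Function.Injective ω}

def WalkFrom (d : ℕ) (n : ℕ) : Type :=
  {ω : Fin (n + 1) → V d // ω 0 = 0 ∧ Function.Injective ω}

def Wn (D : V d → ℝ) (p : ℝ) (n : ℕ) (x : V d) : ℝ≥0∞ :=
  ∑' ω : WalkTo n x, ENNReal.ofReal (s9wt D p n ω.1)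

def An (D : V d → ℝ) (p : ℝ) (n : ℕ) : ℝ≥0∞ :=
  ∑' ω : WalkFrom d n, ENNReal.ofReal (s9wt D p n ω.1)

lemma s9sawG_eq (D : V d → ℝ) (p : ℝ) (x : V d) : sawG D p x = ∑' n, Wn D p n x := rfl

lemma s9wt_eq_range (D : V d → ℝ) (p : ℝ) (n : ℕ) (ω : Fin (n + 1) → V d) :
    s9wt D p n ω = p ^ n * ∏ i ∈ Finset.range n, D (s9stp ω i) := by
  unfold s9wt
  congr 1
  rw [← Fin.prod_univ_eq_prod_range (fun i => D (s9stp ω i)) n]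
  refine Finset.prod_congr rfl fun j _ => ?_
  have h1 : s9idx n ((j : ℕ) + 1) = j.succ := by
    ext; simpa [s9idx] using Nat.min_eq_left j.isLt
  have h2 : s9idx n (j : ℕ) = j.castSucc := by
    ext; simp [s9idx, Nat.min_eq_left j.isLt.le]
  simp [s9stp, h1, h2]

lemma s9wt_nonneg {D : V d → ℝ} (hD : ∀ x, 0 ≤ D x) {p : ℝ} (hp : 0 ≤ p) (n : ℕ)
    (ω : Fin (n + 1) → V d) : 0 ≤ s9wt D p n ω :=
  mul_nonneg (pow_nonneg hp n) (Finset.prod_nonneg fun _ _ => hD _)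

def s9eqv (n : ℕ) : WalkFrom d n ≃ Σ x : V d, WalkTo n x where
  toFun ω := ⟨ω.1 (Fin.last n), ⟨ω.1, ω.2.1, rfl, ω.2.2⟩⟩
  invFun s := ⟨s.2.1, s.2.2.1, s.2.2.2.2⟩
  left_inv ω := rfl
  right_inv s := by
    rcases s with ⟨x, ω, h0, hx, hinj⟩
    subst hx
    rfl

lemma s9An_eq (D : V d → ℝ) (p : ℝ) (n : ℕ) : An D p n = ∑' x, Wn D p n x := by
  unfold An Wn
  refine Eq.trans ?_ (ENNReal.tsum_sigma (fun x (ω : WalkTo n x) => ENNReal.ofReal (s9wt D p n ω.1)))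
  exact (s9eqv n).tsum_eq (fun s : Σ x : V d, WalkTo n x => ENNReal.ofReal (s9wt D p n s.2.1))

lemma s9chi_eq (D : V d → ℝ) (p : ℝ) : chi D p = ∑' n, An D p n := by
  unfold chi
  rw [show (fun x => sawG D p x) = fun x => ∑' n, Wn D p n x from rfl]
  rw [ENNReal.tsum_comm]
  exact tsum_congr fun n => (s9An_eq D p n).symm

lemma s9An_le_chi (D : V d → ℝ) (p : ℝ) (n : ℕ) : An D p n ≤ chi D p := by
  rw [s9chi_eq]
  exact ENNReal.le_tsum n

lemma s9fin1 (i : Fin (0 + 1)) : i = 0 := Fin.ext (by omega)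

instance : Unique (WalkFrom d 0) where
  default := ⟨fun _ => 0, rfl, fun a b _ => (s9fin1 a).trans (s9fin1 b).symm⟩
  uniq ω := by
    apply Subtype.ext
    funext i
    rw [s9fin1 i]
    exact ω.2.1

lemma s9wt_zero (D : V d → ℝ) (p : ℝ) (ω : Fin 1 → V d) : s9wt D p 0 ω = 1 := by
  simp [s9wt]

lemma s9An_zero (D : V d → ℝ) (p : ℝ) : An D p 0 = 1 := by
  unfold An
  rw [tsum_eq_single (default : WalkFrom d 0) fun b hb => absurd (Unique.eq_default b) hb]
  simp [s9wt_zero]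

lemma s9Wn_zero_ne (D : V d → ℝ) (p : ℝ) {x : V d} (hx : x ≠ 0) : Wn D p 0 x = 0 := by
  have : IsEmpty (WalkTo 0 x) := ⟨fun ω => hx (ω.2.2.1.symm.trans ω.2.1)⟩
  exact tsum_empty

instance : Unique (WalkTo 0 (0 : V d)) where
  default := ⟨fun _ => 0, rfl, rfl, fun a b _ => (s9fin1 a).trans (s9fin1 b).symm⟩
  uniq ω := by
    apply Subtype.ext
    funext i
    rw [s9fin1 i]
    exact ω.2.1

lemma s9Wn_zero_zero (D : V d → ℝ) (p : ℝ) : Wn D p 0 (0 : V d) = 1 := by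
  unfold Wn
  rw [tsum_eq_single (default : WalkTo 0 (0 : V d)) fun b hb =>
    absurd (Unique.eq_default b) hb]
  simp [s9wt_zero]
/-! ### Pieces of walks -/

lemma s9idx_roundtrip {N : ℕ} (i : Fin (N + 1)) : s9idx N i.1 = i :=
  Fin.ext (s9idx_val (Nat.lt_succ_iff.mp i.isLt))

lemma s9idx_zero (N : ℕ) : s9idx N 0 = (0 : Fin (N + 1)) := Fin.ext (by simp [s9idx])

lemma s9idx_last (N : ℕ) : s9idx N N = Fin.last N := Fin.ext (by simp [s9idx])

def s9piece (N m off : ℕ) (ω : Fin (N + 1) → V d) : Fin (m + 1) → V d :=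
  fun i => ω (s9idx N (off + i.1)) - ω (s9idx N off)

lemma s9piece_zero (N m off : ℕ) (ω : Fin (N + 1) → V d) : s9piece N m off ω 0 = 0 := by
  simp [s9piece]

lemma s9piece_inj {N m off : ℕ} (h : off + m ≤ N) {ω : Fin (N + 1) → V d}
    (hω : Function.Injective ω) : Function.Injective (s9piece N m off ω) := by
  intro a b hab
  have ha := a.isLt
  have hb := b.isLt
  have h2 : ω (s9idx N (off + a.1)) = ω (s9idx N (off + b.1)) := by
    have := sub_left_inj.mp hab
    exact this
  have h3 := congrArg Fin.val (hω h2)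
  rw [s9idx_val (by omega), s9idx_val (by omega)] at h3
  exact Fin.ext (by omega)

lemma s9stp_piece {N m off : ℕ} (h : off + m ≤ N) (ω : Fin (N + 1) → V d) {i : ℕ}
    (hi : i < m) : s9stp (s9piece N m off ω) i = s9stp ω (off + i) := by
  have e1 : (s9idx m (i + 1)).1 = i + 1 := s9idx_val (by omega)
  have e2 : (s9idx m i).1 = i := s9idx_val (by omega)
  simp only [s9stp, s9piece, e1, e2]
  rw [sub_sub_sub_cancel_right]
  rfl

lemma s9wt_piece (D : V d → ℝ) (p : ℝ) {N m off : ℕ} (h : off + m ≤ N)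
    (ω : Fin (N + 1) → V d) :
    s9wt D p m (s9piece N m off ω) = p ^ m * ∏ i ∈ Finset.range m, D (s9stp ω (off + i)) := by
  rw [s9wt_eq_range]
  congr 1
  exact Finset.prod_congr rfl fun i hi => by rw [s9stp_piece h ω (Finset.mem_range.mp hi)]

lemma s9wt_split2 (D : V d → ℝ) (p : ℝ) (a b : ℕ) (ω : Fin (a + b + 1) → V d) :
    s9wt D p (a + b) ω =
      s9wt D p a (s9piece (a + b) a 0 ω) * s9wt D p b (s9piece (a + b) b a ω) := by
  rw [s9wt_eq_range, s9wt_piece D p (by omega : 0 + a ≤ a + b) ω,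
    s9wt_piece D p (by omega : a + b ≤ a + b) ω,
    Finset.prod_range_add (fun i => D (s9stp ω i)) a b, pow_add]
  simp only [zero_add]
  ring

lemma s9wt_split3 (D : V d → ℝ) (p : ℝ) (j k : ℕ) (ω : Fin (j + 1 + k + 1) → V d) :
    s9wt D p (j + 1 + k) ω =
      s9wt D p j (s9piece (j + 1 + k) j 0 ω) * (p * D (s9stp ω j)) *
        s9wt D p k (s9piece (j + 1 + k) k (j + 1) ω) := by
  rw [s9wt_eq_range, s9wt_piece D p (by omega : 0 + j ≤ j + 1 + k) ω,
    s9wt_piece D p (by omega : (j + 1) + k ≤ j + 1 + k) ω,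
    Finset.prod_range_add (fun i => D (s9stp ω i)) (j + 1) k,
    Finset.prod_range_succ (fun i => D (s9stp ω i)) j, pow_add, pow_succ]
  simp only [zero_add]
  ring

lemma s9recon {N m off i : ℕ} (h : off + m ≤ N) (hi1 : off ≤ i) (hi2 : i ≤ off + m)
    (ω : Fin (N + 1) → V d) :
    ω (s9idx N i) = s9piece N m off ω ⟨i - off, by omega⟩ + ω (s9idx N off) := by
  have e : s9idx N (off + ((⟨i - off, by omega⟩ : Fin (m + 1)).1)) = s9idx N i := by
    congr 1
    show off + (i - off) = i
    omega
  unfold s9piece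
  rw [e, sub_add_cancel]
/-! ### Split maps and injectivity -/

def s9split2 (a b : ℕ) (ω : WalkFrom d (a + b)) : WalkFrom d a × WalkFrom d b :=
  (⟨s9piece (a + b) a 0 ω.1, s9piece_zero _ _ _ _, s9piece_inj (by omega) ω.2.2⟩,
   ⟨s9piece (a + b) b a ω.1, s9piece_zero _ _ _ _, s9piece_inj (by omega) ω.2.2⟩)

lemma s9split2_inj (a b : ℕ) : Function.Injective (s9split2 (d := d) a b) := by
  intro ω ω' hh
  have h1 : s9piece (a + b) a 0 ω.1 = s9piece (a + b) a 0 ω'.1 :=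
    congrArg (fun s : WalkFrom d a × WalkFrom d b => s.1.1) hh
  have h2 : s9piece (a + b) b a ω.1 = s9piece (a + b) b a ω'.1 :=
    congrArg (fun s : WalkFrom d a × WalkFrom d b => s.2.1) hh
  have hz : ω.1 (s9idx (a + b) 0) = ω'.1 (s9idx (a + b) 0) := by
    rw [s9idx_zero, ω.2.1, ω'.2.1]
  have ha : ω.1 (s9idx (a + b) a) = ω'.1 (s9idx (a + b) a) := by
    rw [s9recon (m := a) (off := 0) (by omega) (by omega) (by omega) ω.1,
      s9recon (m := a) (off := 0) (by omega) (by omega) (by omega) ω'.1, h1, hz]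
  apply Subtype.ext
  funext i
  have hiN : i.1 ≤ a + b := Nat.lt_succ_iff.mp i.isLt
  rw [← s9idx_roundtrip i]
  by_cases hc : i.1 ≤ a
  · rw [s9recon (m := a) (off := 0) (by omega) (by omega) (by omega) ω.1,
      s9recon (m := a) (off := 0) (by omega) (by omega) (by omega) ω'.1, h1, hz]
  · rw [s9recon (m := b) (off := a) (by omega) (by omega) (by omega) ω.1,
      s9recon (m := b) (off := a) (by omega) (by omega) (by omega) ω'.1, h2, ha]

def s9split3 (j k : ℕ) (x : V d) (ω : WalkTo (j + 1 + k) x) : WalkFrom d j × WalkFrom d k :=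
  (⟨s9piece (j + 1 + k) j 0 ω.1, s9piece_zero _ _ _ _, s9piece_inj (by omega) ω.2.2.2⟩,
   ⟨s9piece (j + 1 + k) k (j + 1) ω.1, s9piece_zero _ _ _ _, s9piece_inj (by omega) ω.2.2.2⟩)

lemma s9split3_inj (j k : ℕ) (x : V d) : Function.Injective (s9split3 (d := d) j k x) := by
  intro ω ω' hh
  have h1 : s9piece (j + 1 + k) j 0 ω.1 = s9piece (j + 1 + k) j 0 ω'.1 :=
    congrArg (fun s : WalkFrom d j × WalkFrom d k => s.1.1) hh
  have h2 : s9piece (j + 1 + k) k (j + 1) ω.1 = s9piece (j + 1 + k) k (j + 1) ω'.1 :=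
    congrArg (fun s : WalkFrom d j × WalkFrom d k => s.2.1) hh
  have hz : ω.1 (s9idx (j + 1 + k) 0) = ω'.1 (s9idx (j + 1 + k) 0) := by
    rw [s9idx_zero, ω.2.1, ω'.2.1]
  have hb : ω.1 (s9idx (j + 1 + k) (j + 1)) = ω'.1 (s9idx (j + 1 + k) (j + 1)) := by
    have r1 := s9recon (m := k) (off := j + 1) (i := j + 1 + k) (by omega) (by omega)
      (by omega) ω.1
    have r2 := s9recon (m := k) (off := j + 1) (i := j + 1 + k) (by omega) (by omega)
      (by omega) ω'.1
    rw [s9idx_last, ω.2.2.1, h2] at r1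
    rw [s9idx_last, ω'.2.2.1] at r2
    exact add_left_cancel (r1.symm.trans r2)
  apply Subtype.ext
  funext i
  have hiN : i.1 ≤ j + 1 + k := Nat.lt_succ_iff.mp i.isLt
  rw [← s9idx_roundtrip i]
  by_cases hc : i.1 ≤ j
  · rw [s9recon (m := j) (off := 0) (by omega) (by omega) (by omega) ω.1,
      s9recon (m := j) (off := 0) (by omega) (by omega) (by omega) ω'.1, h1, hz]
  · rw [s9recon (m := k) (off := j + 1) (by omega) (by omega) (by omega) ω.1,
      s9recon (m := k) (off := j + 1) (by omega) (by omega) (by omega) ω'.1, h2, hb]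

/-! ### Submultiplicativity -/

lemma s9An_submul {D : V d → ℝ} (hDn : ∀ y, 0 ≤ D y) {p : ℝ} (hp : 0 ≤ p) (a b : ℕ) :
    An D p (a + b) ≤ An D p a * An D p b := by
  have key : ∀ ω : WalkFrom d (a + b), ENNReal.ofReal (s9wt D p (a + b) ω.1) =
      (fun s : WalkFrom d a × WalkFrom d b =>
        ENNReal.ofReal (s9wt D p a s.1.1) * ENNReal.ofReal (s9wt D p b s.2.1))
        (s9split2 a b ω) := by
    intro ω
    show _ = ENNReal.ofReal (s9wt D p a (s9piece (a + b) a 0 ω.1)) *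
      ENNReal.ofReal (s9wt D p b (s9piece (a + b) b a ω.1))
    rw [← ENNReal.ofReal_mul (s9wt_nonneg hDn hp _ _), ← s9wt_split2]
  calc An D p (a + b)
      = ∑' ω : WalkFrom d (a + b), (fun s : WalkFrom d a × WalkFrom d b =>
          ENNReal.ofReal (s9wt D p a s.1.1) * ENNReal.ofReal (s9wt D p b s.2.1))
          (s9split2 a b ω) := tsum_congr key
    _ ≤ ∑' s : WalkFrom d a × WalkFrom d b,
          ENNReal.ofReal (s9wt D p a s.1.1) * ENNReal.ofReal (s9wt D p b s.2.1) :=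
        ENNReal.tsum_comp_le_tsum_of_injective (s9split2_inj a b) _
    _ = An D p a * An D p b := by
        rw [ENNReal.tsum_prod (f := fun (s₁ : WalkFrom d a) (s₂ : WalkFrom d b) =>
          ENNReal.ofReal (s9wt D p a s₁.1) * ENNReal.ofReal (s9wt D p b s₂.1))]
        simp only [ENNReal.tsum_mul_left, ENNReal.tsum_mul_right]
        rfl
/-! ### Existence of a long step -/

lemma s9long_step {n : ℕ} (hn : 1 ≤ n) {x : V d} (ω : WalkTo n x) :
    ∃ j ∈ Finset.range n, nrm x / n ≤ nrm (s9stp ω.1 j) := by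
  have hf0 : ω.1 (s9idx n 0) = 0 := by rw [s9idx_zero]; exact ω.2.1
  have hfn : ω.1 (s9idx n n) = x := by rw [s9idx_last]; exact ω.2.2.1
  have htel : nrm x ≤ ∑ i ∈ Finset.range n, nrm (s9stp ω.1 i) := by
    have := s9nrm_telescope (fun i => ω.1 (s9idx n i)) n
    rw [hf0, hfn, sub_zero] at this
    exact this
  by_contra hcon
  push_neg at hcon
  have hlt : ∑ i ∈ Finset.range n, nrm (s9stp ω.1 i) <
      ∑ i ∈ Finset.range n, nrm x / n :=
    Finset.sum_lt_sum_of_nonempty (Finset.nonempty_range_iff.mpr (by omega)) hcon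
  rw [Finset.sum_const, Finset.card_range, nsmul_eq_mul] at hlt
  have hn' : (0:ℝ) < n := by exact_mod_cast hn
  rw [mul_div_cancel₀ _ (ne_of_gt hn')] at hlt
  linarith

/-! ### The key decomposition estimate -/

lemma s9stepC {D : V d → ℝ} (hDn : ∀ y, 0 ≤ D y) {p : ℝ} (hp : 0 ≤ p) {α L c₁ : ℝ}
    (hα : 0 < α) (hL : 1 ≤ L) (hc₁ : 0 ≤ c₁)
    (hDbd : ∀ y : V d, D y ≤ c₁ * L ^ α * bkt L y ^ (-(d : ℝ) - α))
    (n j k : ℕ) (h : n = j + 1 + k) (x : V d) :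
    ∑' ω : WalkTo n x,
        (if nrm x / n ≤ nrm (s9stp ω.1 j) then ENNReal.ofReal (s9wt D p n ω.1) else 0)
      ≤ ENNReal.ofReal (p * c₁ * L ^ α * (n : ℝ) ^ ((d : ℝ) + α) * bkt L x ^ (-(d : ℝ) - α))
          * (An D p j * An D p k) := by
  subst h
  have hβpos : 0 < (d : ℝ) + α := by positivity
  have hL0 : (0:ℝ) < L := by linarith
  have hexp : -(d : ℝ) - α = -((d : ℝ) + α) := by ring
  set B : ℝ := p * c₁ * L ^ α * ((j + 1 + k : ℕ) : ℝ) ^ ((d : ℝ) + α)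
      * bkt L x ^ (-(d : ℝ) - α) with hB
  have key : ∀ ω : WalkTo (j + 1 + k) x,
      (if nrm x / (j + 1 + k : ℕ) ≤ nrm (s9stp ω.1 j) then
        ENNReal.ofReal (s9wt D p (j + 1 + k) ω.1) else 0)
      ≤ ENNReal.ofReal B * ((fun s : WalkFrom d j × WalkFrom d k =>
          ENNReal.ofReal (s9wt D p j s.1.1) * ENNReal.ofReal (s9wt D p k s.2.1))
          (s9split3 j k x ω)) := by
    intro ω
    show _ ≤ ENNReal.ofReal B * (ENNReal.ofReal (s9wt D p j (s9piece (j + 1 + k) j 0 ω.1)) *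
      ENNReal.ofReal (s9wt D p k (s9piece (j + 1 + k) k (j + 1) ω.1)))
    split_ifs with hcond
    · have hstep : p * D (s9stp ω.1 j) ≤ B := by
        have h1 : D (s9stp ω.1 j) ≤ c₁ * L ^ α * bkt L (s9stp ω.1 j) ^ (-(d : ℝ) - α) :=
          hDbd _
        have h2 : bkt L (s9stp ω.1 j) ^ (-((d : ℝ) + α)) ≤
            ((j + 1 + k : ℕ) : ℝ) ^ ((d : ℝ) + α) * bkt L x ^ (-((d : ℝ) + α)) :=
          s9bkt_rpow hL0 hβpos (by omega) hcond
        rw [hB, hexp]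
        rw [hexp] at h1
        have h3 : D (s9stp ω.1 j) ≤ c₁ * L ^ α * (((j + 1 + k : ℕ) : ℝ) ^ ((d : ℝ) + α) *
            bkt L x ^ (-((d : ℝ) + α))) := by
          refine h1.trans ?_
          have hLα : (0:ℝ) ≤ L ^ α := Real.rpow_nonneg hL0.le α
          exact mul_le_mul_of_nonneg_left h2 (by positivity)
        calc p * D (s9stp ω.1 j)
            ≤ p * (c₁ * L ^ α * (((j + 1 + k : ℕ) : ℝ) ^ ((d : ℝ) + α) *
              bkt L x ^ (-((d : ℝ) + α)))) := mul_le_mul_of_nonneg_left h3 hp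
          _ = p * c₁ * L ^ α * ((j + 1 + k : ℕ) : ℝ) ^ ((d : ℝ) + α) *
              bkt L x ^ (-((d : ℝ) + α)) := by ring
      rw [s9wt_split3 D p j k ω.1,
        ENNReal.ofReal_mul (mul_nonneg (s9wt_nonneg hDn hp _ _)
          (mul_nonneg hp (hDn _))),
        ENNReal.ofReal_mul (s9wt_nonneg hDn hp _ _)]
      have hre : ENNReal.ofReal (s9wt D p j (s9piece (j + 1 + k) j 0 ω.1)) *
          ENNReal.ofReal (p * D (s9stp ω.1 j)) *
          ENNReal.ofReal (s9wt D p k (s9piece (j + 1 + k) k (j + 1) ω.1)) =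
          ENNReal.ofReal (p * D (s9stp ω.1 j)) *
          (ENNReal.ofReal (s9wt D p j (s9piece (j + 1 + k) j 0 ω.1)) *
           ENNReal.ofReal (s9wt D p k (s9piece (j + 1 + k) k (j + 1) ω.1))) := by ring
      rw [hre]
      exact mul_le_mul_left (ENNReal.ofReal_le_ofReal hstep) _
    · exact zero_le
  calc ∑' ω : WalkTo (j + 1 + k) x,
      (if nrm x / (j + 1 + k : ℕ) ≤ nrm (s9stp ω.1 j) then
        ENNReal.ofReal (s9wt D p (j + 1 + k) ω.1) else 0)
      ≤ ∑' ω : WalkTo (j + 1 + k) x, ENNReal.ofReal B *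
          ((fun s : WalkFrom d j × WalkFrom d k =>
            ENNReal.ofReal (s9wt D p j s.1.1) * ENNReal.ofReal (s9wt D p k s.2.1))
            (s9split3 j k x ω)) := ENNReal.tsum_le_tsum key
    _ = ENNReal.ofReal B * ∑' ω : WalkTo (j + 1 + k) x,
          ((fun s : WalkFrom d j × WalkFrom d k =>
            ENNReal.ofReal (s9wt D p j s.1.1) * ENNReal.ofReal (s9wt D p k s.2.1))
            (s9split3 j k x ω)) := ENNReal.tsum_mul_left
    _ ≤ ENNReal.ofReal B * ∑' s : WalkFrom d j × WalkFrom d k,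
          ENNReal.ofReal (s9wt D p j s.1.1) * ENNReal.ofReal (s9wt D p k s.2.1) :=
        mul_le_mul_right (ENNReal.tsum_comp_le_tsum_of_injective (s9split3_inj j k x) _) _
    _ = ENNReal.ofReal B * (An D p j * An D p k) := by
        rw [ENNReal.tsum_prod (f := fun (s₁ : WalkFrom d j) (s₂ : WalkFrom d k) =>
          ENNReal.ofReal (s9wt D p j s₁.1) * ENNReal.ofReal (s9wt D p k s₂.1))]
        simp only [ENNReal.tsum_mul_left, ENNReal.tsum_mul_right]
        rfl
/-! ### Bound on `Wn` for positive lengths -/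

lemma s9Wn_le {D : V d → ℝ} (hDn : ∀ y, 0 ≤ D y) {p : ℝ} (hp : 0 ≤ p) {α L c₁ : ℝ}
    (hα : 0 < α) (hL : 1 ≤ L) (hc₁ : 0 ≤ c₁)
    (hDbd : ∀ y : V d, D y ≤ c₁ * L ^ α * bkt L y ^ (-(d : ℝ) - α))
    (n : ℕ) (hn : 1 ≤ n) (x : V d) :
    Wn D p n x ≤ ∑ j ∈ Finset.range n,
      ENNReal.ofReal (p * c₁ * L ^ α * (n : ℝ) ^ ((d : ℝ) + α) * bkt L x ^ (-(d : ℝ) - α))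
        * (An D p j * An D p (n - 1 - j)) := by
  have hsplit : ∀ ω : WalkTo n x, ENNReal.ofReal (s9wt D p n ω.1) ≤
      ∑ j ∈ Finset.range n,
        (if nrm x / n ≤ nrm (s9stp ω.1 j) then ENNReal.ofReal (s9wt D p n ω.1) else 0) := by
    intro ω
    obtain ⟨j, hjmem, hj⟩ := s9long_step hn ω
    refine le_trans ?_ (Finset.single_le_sum
      (f := fun j => if nrm x / n ≤ nrm (s9stp ω.1 j) then
        ENNReal.ofReal (s9wt D p n ω.1) else 0) (fun _ _ => zero_le) hjmem)
    show _ ≤ if nrm x / (n : ℕ) ≤ nrm (s9stp ω.1 j) then ENNReal.ofReal (s9wt D p n ω.1) else 0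
    rw [if_pos hj]
  calc Wn D p n x
      ≤ ∑' ω : WalkTo n x, ∑ j ∈ Finset.range n,
          (if nrm x / n ≤ nrm (s9stp ω.1 j) then ENNReal.ofReal (s9wt D p n ω.1) else 0) :=
        ENNReal.tsum_le_tsum hsplit
    _ = ∑ j ∈ Finset.range n, ∑' ω : WalkTo n x,
          (if nrm x / n ≤ nrm (s9stp ω.1 j) then ENNReal.ofReal (s9wt D p n ω.1) else 0) :=
        Summable.tsum_finsetSum fun _ _ => ENNReal.summable
    _ ≤ ∑ j ∈ Finset.range n,
        ENNReal.ofReal (p * c₁ * L ^ α * (n : ℝ) ^ ((d : ℝ) + α) * bkt L x ^ (-(d : ℝ) - α))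
          * (An D p j * An D p (n - 1 - j)) := by
        refine Finset.sum_le_sum fun j hj => ?_
        have hjn : j < n := Finset.mem_range.mp hj
        exact s9stepC hDn hp hα hL hc₁ hDbd n j (n - 1 - j) (by omega) x

/-! ### Geometric decay of `An` -/

lemma s9geo {D : V d → ℝ} (hDn : ∀ y, 0 ≤ D y) {p : ℝ} (hp : 0 ≤ p)
    (hχ : chi D p ≠ ⊤) :
    ∃ C ρ : ℝ, 0 ≤ C ∧ 0 < ρ ∧ ρ < 1 ∧ ∀ n, An D p n ≤ ENNReal.ofReal (C * ρ ^ n) := by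
  have hsum : ∑' n, An D p n ≠ ⊤ := by rw [← s9chi_eq]; exact hχ
  have htend : Tendsto (An D p) atTop (nhds 0) := ENNReal.tendsto_atTop_zero_of_tsum_ne_top hsum
  have hhalf : ∀ᶠ n in atTop, An D p n < ENNReal.ofReal (1/2) :=
    htend.eventually_lt_const (ENNReal.ofReal_pos.mpr (by norm_num))
  obtain ⟨m₀, hm₀⟩ := Filter.eventually_atTop.mp hhalf
  set m : ℕ := m₀ + 1 with hmdef
  have hm : An D p m ≤ ENNReal.ofReal (1/2) := (hm₀ m (by omega)).le
  have hiter : ∀ q r, An D p (r + q * m) ≤ An D p r * (ENNReal.ofReal (1/2)) ^ q := by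
    intro q
    induction q with
    | zero => intro r; simp
    | succ q ih =>
        intro r
        have he : r + (q + 1) * m = (r + q * m) + m := by ring
        rw [he]
        calc An D p ((r + q * m) + m) ≤ An D p (r + q * m) * An D p m :=
              s9An_submul hDn hp _ _
          _ ≤ (An D p r * (ENNReal.ofReal (1/2)) ^ q) * ENNReal.ofReal (1/2) :=
              mul_le_mul' (ih r) hm
          _ = An D p r * (ENNReal.ofReal (1/2)) ^ (q + 1) := by ring
  have hAfin : ∀ r, An D p r ≠ ⊤ := fun r =>
    ne_top_of_le_ne_top hχ (s9An_le_chi D p r)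
  set Cm : ℝ := (∑ r ∈ Finset.range m, (An D p r).toReal) + 1 with hCm
  have hCm0 : 0 ≤ Cm := by
    have : 0 ≤ ∑ r ∈ Finset.range m, (An D p r).toReal :=
      Finset.sum_nonneg fun _ _ => ENNReal.toReal_nonneg
    linarith
  have hCmr : ∀ r, r < m → An D p r ≤ ENNReal.ofReal Cm := by
    intro r hr
    rw [← ENNReal.ofReal_toReal (hAfin r)]
    apply ENNReal.ofReal_le_ofReal
    have := Finset.single_le_sum (f := fun r => (An D p r).toReal)
      (fun i _ => ENNReal.toReal_nonneg) (Finset.mem_range.mpr hr)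
    rw [hCm]
    linarith
  set ρ : ℝ := (1/2 : ℝ) ^ (1 / (m : ℝ)) with hρdef
  have hmR : (0:ℝ) < m := by positivity
  have hρ0 : 0 < ρ := Real.rpow_pos_of_pos (by norm_num) _
  have hρ1 : ρ < 1 := Real.rpow_lt_one (by norm_num) (by norm_num) (by positivity)
  refine ⟨2 * Cm, ρ, by linarith, hρ0, hρ1, fun n => ?_⟩
  have hdecomp : n % m + (n / m) * m = n := Nat.mod_add_div' n m
  have h1 : An D p n ≤ ENNReal.ofReal Cm * (ENNReal.ofReal (1/2)) ^ (n / m) := by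
    calc An D p n = An D p (n % m + (n / m) * m) := by rw [hdecomp]
      _ ≤ An D p (n % m) * (ENNReal.ofReal (1/2)) ^ (n / m) := hiter _ _
      _ ≤ ENNReal.ofReal Cm * (ENNReal.ofReal (1/2)) ^ (n / m) :=
          mul_le_mul_left (hCmr _ (Nat.mod_lt _ (by omega))) _
  have h2 : ENNReal.ofReal Cm * (ENNReal.ofReal (1/2)) ^ (n / m) =
      ENNReal.ofReal (Cm * (1/2 : ℝ) ^ (n / m)) := by
    rw [ENNReal.ofReal_mul hCm0, ← ENNReal.ofReal_pow (by norm_num)]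
  rw [h2] at h1
  refine h1.trans (ENNReal.ofReal_le_ofReal ?_)
  have hq : (n : ℝ) / (m : ℝ) - 1 < ((n / m : ℕ) : ℝ) := by
    have hmod : n % m < m := Nat.mod_lt _ (by omega)
    have hcast : ((n % m : ℕ) : ℝ) + ((n / m : ℕ) : ℝ) * (m : ℝ) = (n : ℝ) := by
      exact_mod_cast congrArg (fun t : ℕ => (t : ℝ)) hdecomp
    have hmodR : ((n % m : ℕ) : ℝ) < (m : ℝ) := by exact_mod_cast hmod
    rw [div_sub_one (ne_of_gt hmR), div_lt_iff₀ hmR]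
    nlinarith
  have hpow : (1/2 : ℝ) ^ (n / m : ℕ) ≤ 2 * ρ ^ n := by
    have e1 : ρ ^ n = (1/2 : ℝ) ^ ((n : ℝ) / (m : ℝ)) := by
      rw [hρdef, ← Real.rpow_natCast ((1/2 : ℝ) ^ (1/(m:ℝ))) n,
        ← Real.rpow_mul (by norm_num)]
      congr 1
      field_simp
    have e2 : (1/2 : ℝ) ^ (n / m : ℕ) = (1/2 : ℝ) ^ (((n / m : ℕ)) : ℝ) :=
      (Real.rpow_natCast _ _).symm
    rw [e1, e2]
    have h3 : (1/2 : ℝ) ^ (((n / m : ℕ)) : ℝ) ≤ (1/2 : ℝ) ^ ((n : ℝ)/(m : ℝ) - 1) :=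
      Real.rpow_le_rpow_of_exponent_ge (by norm_num) (by norm_num) (by linarith)
    refine h3.trans ?_
    rw [Real.rpow_sub (by norm_num), Real.rpow_one]
    have hx0 : (0:ℝ) < (1/2 : ℝ) ^ ((n:ℝ)/(m:ℝ)) := Real.rpow_pos_of_pos (by norm_num) _
    rw [div_le_iff₀ (by norm_num : (0:ℝ) < 1/2)]
    nlinarith
  calc Cm * (1/2 : ℝ) ^ (n / m : ℕ) ≤ Cm * (2 * ρ ^ n) :=
      mul_le_mul_of_nonneg_left hpow hCm0
    _ = 2 * Cm * ρ ^ n := by ring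

/-! ### Packaged per-n bound -/

lemma s9Wn_le' {D : V d → ℝ} (hDn : ∀ y, 0 ≤ D y) {p : ℝ} (hp : 0 ≤ p) {α L c₁ : ℝ}
    (hα : 0 < α) (hL : 1 ≤ L) (hc₁ : 0 ≤ c₁)
    (hDbd : ∀ y : V d, D y ≤ c₁ * L ^ α * bkt L y ^ (-(d : ℝ) - α))
    {C ρ : ℝ} (hC0 : 0 ≤ C) (hρ0 : 0 < ρ)
    (n : ℕ) (hn : 1 ≤ n) (x : V d)
    (hgeo : ∀ m, An D p m ≤ ENNReal.ofReal (C * ρ ^ m)) :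
    Wn D p n x ≤ ENNReal.ofReal ((p * c₁ * L ^ α * (C ^ 2 / ρ)) *
      ((n:ℝ) ^ (⌈(d:ℝ) + α⌉₊ + 1) * ρ ^ n) * bkt L x ^ (-(d:ℝ) - α)) := by
  have hL0 : (0:ℝ) < L := by linarith
  set k₀ : ℕ := ⌈(d:ℝ) + α⌉₊ + 1 with hk₀
  set P : ℝ := p * c₁ * L ^ α * (C ^ 2 / ρ) with hP
  have hb' : (0:ℝ) ≤ bkt L x ^ (-(d:ℝ) - α) := Real.rpow_nonneg (s9bkt_pos hL0 x).le _
  have hBn0 : (0:ℝ) ≤ p * c₁ * L ^ α * (n:ℝ) ^ ((d:ℝ) + α) * bkt L x ^ (-(d:ℝ) - α) := by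
    have : (0:ℝ) ≤ (n:ℝ) ^ ((d:ℝ) + α) := Real.rpow_nonneg (by positivity) _
    positivity
  refine (s9Wn_le hDn hp hα hL hc₁ hDbd n hn x).trans ?_
  have hterm : ∀ j ∈ Finset.range n,
      ENNReal.ofReal (p * c₁ * L ^ α * (n:ℝ) ^ ((d:ℝ) + α) * bkt L x ^ (-(d:ℝ) - α))
          * (An D p j * An D p (n - 1 - j))
      ≤ ENNReal.ofReal ((p * c₁ * L ^ α * (n:ℝ) ^ ((d:ℝ) + α) * bkt L x ^ (-(d:ℝ) - α))
          * (C ^ 2 * ρ ^ (n - 1))) := by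
    intro j hj
    have hjn : j < n := Finset.mem_range.mp hj
    have hAn : An D p j * An D p (n - 1 - j) ≤ ENNReal.ofReal (C ^ 2 * ρ ^ (n - 1)) := by
      calc An D p j * An D p (n - 1 - j)
          ≤ ENNReal.ofReal (C * ρ ^ j) * ENNReal.ofReal (C * ρ ^ (n - 1 - j)) :=
            mul_le_mul' (hgeo j) (hgeo _)
        _ = ENNReal.ofReal ((C * ρ ^ j) * (C * ρ ^ (n - 1 - j))) :=
            (ENNReal.ofReal_mul (by positivity)).symm
        _ = ENNReal.ofReal (C ^ 2 * ρ ^ (n - 1)) := by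
            rw [show (C * ρ ^ j) * (C * ρ ^ (n - 1 - j)) = C ^ 2 * ρ ^ (j + (n - 1 - j)) by
              rw [pow_add]; ring]
            rw [show j + (n - 1 - j) = n - 1 by omega]
    calc ENNReal.ofReal (p * c₁ * L ^ α * (n:ℝ) ^ ((d:ℝ) + α) * bkt L x ^ (-(d:ℝ) - α))
          * (An D p j * An D p (n - 1 - j))
        ≤ ENNReal.ofReal (p * c₁ * L ^ α * (n:ℝ) ^ ((d:ℝ) + α) * bkt L x ^ (-(d:ℝ) - α))
          * ENNReal.ofReal (C ^ 2 * ρ ^ (n - 1)) := mul_le_mul_right hAn _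
      _ = ENNReal.ofReal ((p * c₁ * L ^ α * (n:ℝ) ^ ((d:ℝ) + α) * bkt L x ^ (-(d:ℝ) - α))
          * (C ^ 2 * ρ ^ (n - 1))) := (ENNReal.ofReal_mul hBn0).symm
  refine (Finset.sum_le_sum hterm).trans ?_
  rw [Finset.sum_const, Finset.card_range, nsmul_eq_mul]
  rw [show ((n : ℕ) : ℝ≥0∞) = ENNReal.ofReal ((n : ℕ) : ℝ) from (ENNReal.ofReal_natCast n).symm]
  rw [← ENNReal.ofReal_mul (by positivity : (0:ℝ) ≤ ((n:ℕ):ℝ))]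
  apply ENNReal.ofReal_le_ofReal
  have h1n : (1:ℝ) ≤ (n:ℝ) := by exact_mod_cast hn
  have hn0 : (0:ℝ) < (n:ℝ) := by linarith
  have hnb : (n:ℝ) ^ ((d:ℝ) + α) * (n:ℝ) ≤ (n:ℝ) ^ k₀ := by
    have h2 : (n:ℝ) ^ ((d:ℝ) + α) ≤ (n:ℝ) ^ ((k₀:ℝ) - 1) := by
      refine Real.rpow_le_rpow_of_exponent_le h1n ?_
      have hceil := Nat.le_ceil ((d:ℝ) + α)
      rw [hk₀]
      push_cast
      linarith
    calc (n:ℝ) ^ ((d:ℝ) + α) * (n:ℝ) ≤ (n:ℝ) ^ ((k₀:ℝ) - 1) * (n:ℝ) :=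
          mul_le_mul_of_nonneg_right h2 hn0.le
      _ = (n:ℝ) ^ ((k₀:ℝ) - 1) * (n:ℝ) ^ (1:ℝ) := by rw [Real.rpow_one]
      _ = (n:ℝ) ^ ((k₀:ℝ)) := by rw [← Real.rpow_add hn0]; norm_num
      _ = (n:ℝ) ^ k₀ := Real.rpow_natCast _ _
  have hρpow : ρ ^ (n - 1) = ρ ^ n / ρ := by
    rw [eq_div_iff (ne_of_gt hρ0), ← pow_succ]
    congr 1
    omega
  have hb'' : (0:ℝ) ≤ p * c₁ * L ^ α * C ^ 2 / ρ * (bkt L x ^ (-(d:ℝ) - α)) := by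
    have := div_nonneg (by positivity : (0:ℝ) ≤ p * c₁ * L ^ α * C ^ 2) hρ0.le
    positivity
  calc ((n:ℕ):ℝ) * ((p * c₁ * L ^ α * (n:ℝ) ^ ((d:ℝ) + α) * bkt L x ^ (-(d:ℝ) - α))
        * (C ^ 2 * ρ ^ (n - 1)))
      = (p * c₁ * L ^ α * C ^ 2 / ρ * (bkt L x ^ (-(d:ℝ) - α)))
          * ((n:ℝ) ^ ((d:ℝ) + α) * (n:ℝ) * ρ ^ n) := by rw [hρpow]; field_simp
    _ ≤ (p * c₁ * L ^ α * C ^ 2 / ρ * (bkt L x ^ (-(d:ℝ) - α)))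
          * ((n:ℝ) ^ k₀ * ρ ^ n) := by
        refine mul_le_mul_of_nonneg_left ?_ hb''
        exact mul_le_mul_of_nonneg_right hnb (pow_nonneg hρ0.le n)
    _ = P * ((n:ℝ) ^ k₀ * ρ ^ n) * bkt L x ^ (-(d:ℝ) - α) := by rw [hP]; ring

/-- subcritical power-law upper bound on the SAW two-point function. -/
theorem statement9 (d : ℕ) (hd : 1 ≤ d) (α L c₁ : ℝ) (hα : 0 < α) (hL : 1 ≤ L)
    (D : V d → ℝ) (hD : IsStepDist D)
    (hDbd : ∀ x : V d, D x ≤ c₁ * L ^ α * bkt L x ^ (-(d : ℝ) - α))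
    (p : ℝ) (hp : 0 ≤ p) (hχ : chi D p ≠ ⊤) :
    ∃ K : ℝ, 0 ≤ K ∧
      ∀ x : V d, sawG D p x ≤ ENNReal.ofReal (K * bkt L x ^ (-(d : ℝ) - α)) := by
  have hL0 : (0:ℝ) < L := by linarith
  have hDn := hD.nonneg
  have hc₁ : 0 ≤ c₁ := by
    by_contra hneg
    push_neg at hneg
    obtain ⟨y, hy⟩ : ∃ y : V d, D y ≠ 0 := by
      by_contra hall
      push_neg at hall
      have h0 : HasSum D 0 := by
        have : D = fun _ => 0 := funext hall
        rw [this]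
        exact hasSum_zero
      exact one_ne_zero (hD.sum_one.unique h0)
    have hy' : 0 < D y := lt_of_le_of_ne (hDn y) (Ne.symm hy)
    have hb := hDbd y
    have h1 : (0:ℝ) < L ^ α := Real.rpow_pos_of_pos hL0 _
    have h2 : (0:ℝ) < bkt L y ^ (-(d:ℝ) - α) := Real.rpow_pos_of_pos (s9bkt_pos hL0 y) _
    have h3 : c₁ * L ^ α * bkt L y ^ (-(d:ℝ) - α) < 0 := by
      have h4 := mul_pos h1 h2
      nlinarith
    linarith
  obtain ⟨C, ρ, hC0, hρ0, hρ1, hgeo⟩ := s9geo hDn hp hχ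
  set k₀ : ℕ := ⌈(d:ℝ) + α⌉₊ + 1 with hk₀
  have hsum : Summable (fun n : ℕ => (n:ℝ) ^ k₀ * ρ ^ n) :=
    summable_pow_mul_geometric_of_norm_lt_one k₀
      (by rwa [Real.norm_eq_abs, abs_of_pos hρ0])
  have hLα : (0:ℝ) ≤ L ^ α := Real.rpow_nonneg hL0.le α
  set P : ℝ := p * c₁ * L ^ α * (C ^ 2 / ρ) with hP
  have hP0 : 0 ≤ P := by
    rw [hP]
    have : (0:ℝ) ≤ C ^ 2 / ρ := div_nonneg (by positivity) hρ0.le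
    positivity
  set T : ℕ → ℝ := fun n => P * ((n:ℝ) ^ k₀ * ρ ^ n) with hT
  have hTsum : Summable T := hsum.mul_left P
  have hT0 : ∀ n, 0 ≤ T n := fun n =>
    mul_nonneg hP0 (mul_nonneg (by positivity) (pow_nonneg hρ0.le _))
  have hWn : ∀ n, 1 ≤ n → ∀ x : V d,
      Wn D p n x ≤ ENNReal.ofReal (T n * bkt L x ^ (-(d:ℝ) - α)) := by
    intro n hn x
    have h := s9Wn_le' hDn hp hα hL hc₁ hDbd hC0 hρ0 n hn x hgeo
    simp only [hT, hP, hk₀]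
    exact h
  refine ⟨L ^ ((d:ℝ) + α) + ∑' n, T (n + 1), ?_, ?_⟩
  · have h1 : (0:ℝ) ≤ L ^ ((d:ℝ) + α) := Real.rpow_nonneg hL0.le _
    have h2 : (0:ℝ) ≤ ∑' n, T (n + 1) := tsum_nonneg fun n => hT0 _
    linarith
  intro x
  have hb' : (0:ℝ) ≤ bkt L x ^ (-(d:ℝ) - α) := Real.rpow_nonneg (s9bkt_pos hL0 x).le _
  have hTsum1 : Summable (fun n => T (n + 1)) := (summable_nat_add_iff 1).mpr hTsum
  have h0 : Wn D p 0 x ≤ ENNReal.ofReal (L ^ ((d:ℝ) + α) * bkt L x ^ (-(d:ℝ) - α)) := by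
    by_cases hx : x = 0
    · subst hx
      rw [s9Wn_zero_zero]
      have hbz : bkt L (0 : V d) = L := by
        rw [bkt, s9nrm_zero]
        exact max_eq_right (by linarith)
      rw [hbz, ← Real.rpow_add hL0, show (d:ℝ) + α + (-(d:ℝ) - α) = 0 by ring,
        Real.rpow_zero, ENNReal.ofReal_one]
    · rw [s9Wn_zero_ne D p hx]
      exact zero_le
  have hrest : ∑' n : ℕ, Wn D p (n + 1) x ≤
      ENNReal.ofReal ((∑' n, T (n + 1)) * bkt L x ^ (-(d:ℝ) - α)) := by
    calc ∑' n : ℕ, Wn D p (n + 1) x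
        ≤ ∑' n : ℕ, ENNReal.ofReal (T (n + 1) * bkt L x ^ (-(d:ℝ) - α)) :=
          ENNReal.tsum_le_tsum fun n => hWn (n + 1) (by omega) x
      _ = ENNReal.ofReal (∑' n, T (n + 1) * bkt L x ^ (-(d:ℝ) - α)) :=
          (ENNReal.ofReal_tsum_of_nonneg (fun n => mul_nonneg (hT0 _) hb')
            (hTsum1.mul_right _)).symm
      _ = ENNReal.ofReal ((∑' n, T (n + 1)) * bkt L x ^ (-(d:ℝ) - α)) := by
          rw [tsum_mul_right]
  calc sawG D p x = ∑' n, Wn D p n x := s9sawG_eq D p x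
    _ = Wn D p 0 x + ∑' n, Wn D p (n + 1) x := tsum_eq_zero_add' ENNReal.summable
    _ ≤ ENNReal.ofReal (L ^ ((d:ℝ) + α) * bkt L x ^ (-(d:ℝ) - α)) +
        ENNReal.ofReal ((∑' n, T (n + 1)) * bkt L x ^ (-(d:ℝ) - α)) := add_le_add h0 hrest
    _ = ENNReal.ofReal ((L ^ ((d:ℝ) + α) + ∑' n, T (n + 1)) * bkt L x ^ (-(d:ℝ) - α)) := by
        rw [← ENNReal.ofReal_add (mul_nonneg (Real.rpow_nonneg hL0.le _) hb')
          (mul_nonneg (tsum_nonneg fun n => hT0 _) hb'), add_mul]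

end LongRange
end
end
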